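/- arXiv:1804.06933 — 9 statements merged into one kernel-verified Lean document; each statement's English description precedes it below -/
import Mathlib

section
/- If (A,∧,∨,→,0,1) is a weak Heyting algebra, then (A,∧,∨,∧,→,1) (taking the monoid operation to be meet) is a DLCMI; in particular a→b ≤ (a∧c)→(b∧c) holds in every weak Heyting algebra. -/
theorem wh_is_dlcmi {α : Type*} [DistribLattice α] [BoundedOrder α]
    (imp : α → α → α)
    (w1 : ∀ a b c : α, imp a b ⊓ imp a c = imp a (b ⊓ c))
    (w2 : ∀ a b c : α, imp a c ⊓ imp b c = imp (a ⊔ b) c)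
    (w3 : ∀ a b c : α, imp a b ⊓ imp b c ≤ imp a c)
    (w4 : ∀ a : α, imp a a = ⊤) :
    (∀ a : α, a ⊓ ⊤ = a) ∧
    (∀ a b : α, a ⊓ b = b ⊓ a) ∧
    (∀ a b c : α, (a ⊓ b) ⊓ c = a ⊓ (b ⊓ c)) ∧
    (∀ a b c : α, (a ⊔ b) ⊓ c = (a ⊓ c) ⊔ (b ⊓ c)) ∧
    (∀ a b c : α, imp a b ≤ imp (a ⊓ c) (b ⊓ c)) := by
  have anti : ∀ x y z : α, x ≤ y → imp y z ≤ imp x z := by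
    intro x y z hxy
    have h := w2 x y z
    rw [sup_eq_right.mpr hxy] at h
    calc imp y z = imp x z ⊓ imp y z := h.symm
      _ ≤ imp x z := inf_le_left
  refine ⟨fun a => inf_top_eq a, fun a b => inf_comm a b,
    fun a b c => inf_assoc a b c, fun a b c => inf_sup_right a b c, ?_⟩
  intro a b c
  rw [← w1]
  have h1 : imp a b ≤ imp (a ⊓ c) b := anti _ _ _ inf_le_left
  have h2 : imp (a ⊓ c) c = ⊤ := by
    have := anti (a ⊓ c) c c inf_le_right
    rw [w4] at this
    exact top_le_iff.mp this
  rw [h2]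
  simpa using h1
end

section
/- Let A be an algebra of type (2,2,2,2,0) satisfying axioms (1)–(8) of DLCMI. Then A satisfies a→b ≤ (a·c)→(b·c) for all a,b,c if and only if A satisfies (a→b)·(c→d) ≤ (a·c)→(b·d) for all a,b,c,d. -/
theorem dlcmi_axiom9_iff {α : Type*} [DistribLattice α] [CommMonoid α]
    (htop : ∀ a : α, a ≤ 1)
    (imp : α → α → α)
    (h4 : ∀ a b c : α, imp a b ⊓ imp a c = imp a (b ⊓ c))
    (h5 : ∀ a b c : α, imp a c ⊓ imp b c = imp (a ⊔ b) c)
    (h6 : ∀ a : α, imp a a = 1)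
    (h7 : ∀ a b c : α, (a ⊔ b) * c = a * c ⊔ b * c)
    (h8 : ∀ a b c : α, imp a b * imp b c ≤ imp a c) :
    (∀ a b c : α, imp a b ≤ imp (a * c) (b * c)) ↔
      (∀ a b c d : α, imp a b * imp c d ≤ imp (a * c) (b * d)) := by
  have hmono : ∀ x y z : α, x ≤ y → x * z ≤ y * z := by
    intro x y z hxy
    have : (x ⊔ y) * z = x * z ⊔ y * z := h7 x y z
    rw [sup_eq_right.mpr hxy] at this
    rw [this]
    exact le_sup_left
  constructor
  · intro h9 a b c d
    calc imp a b * imp c d ≤ imp (a * c) (b * c) * imp (c * b) (d * b) := by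
          have h1 := hmono _ _ (imp c d) (h9 a b c)
          have h2 := hmono _ _ (imp (a*c) (b*c)) (h9 c d b)
          calc imp a b * imp c d ≤ imp (a*c) (b*c) * imp c d := h1
            _ = imp c d * imp (a*c) (b*c) := mul_comm _ _
            _ ≤ imp (c*b) (d*b) * imp (a*c) (b*c) := h2
            _ = imp (a*c) (b*c) * imp (c*b) (d*b) := mul_comm _ _
      _ = imp (a * c) (b * c) * imp (b * c) (b * d) := by rw [mul_comm c b, mul_comm d b]
      _ ≤ imp (a * c) (b * d) := h8 _ _ _
  · intro h a b c
    have := h a b c c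
    rwa [h6, mul_one] at this
end

section
/- Let A be a DLCMI and a,b ∈ A. Define the relation R(a,b) by: (c,d) ∈ R(a,b) iff there exist natural numbers n,k with (C1) tₙᵏ(a,b)·(c∧a∧b) ≤ d∧a∧b and tₙᵏ(a,b)·(d∧a∧b) ≤ c∧a∧b, (C2) tₙᵏ(a,b)·(c∨a∨b) ≤ d∨a∨b and tₙᵏ(a,b)·(d∨a∨b) ≤ c∨a∨b, (C3) tₙᵏ(a,b) ≤ c↔d. Then (a,b) ∈ R(a,b) and R(a,b) is a congruence of the lattice reduct of A. -/
def boxIter {α : Type*} [One α] (imp : α → α → α) : ℕ → α → α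
  | 0, x => x
  | n + 1, x => imp 1 (boxIter imp n x)

def biimp {α : Type*} [SemilatticeInf α] (imp : α → α → α) (x y : α) : α :=
  imp x y ⊓ imp y x

def tt {α : Type*} [SemilatticeInf α] [One α] (imp : α → α → α) : ℕ → α → α → α
  | 0, a, b => biimp imp a b
  | n + 1, a, b => tt imp n a b ⊓ boxIter imp (n + 1) (biimp imp a b)

def IsLatCong {α : Type*} [Lattice α] (r : α → α → Prop) : Prop :=
  Equivalence r ∧ (∀ a b c : α, r a b → r (a ⊓ c) (b ⊓ c)) ∧
    (∀ a b c : α, r a b → r (a ⊔ c) (b ⊔ c))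

def Rrel {α : Type*} [DistribLattice α] [CommMonoid α] (imp : α → α → α)
    (a b c d : α) : Prop :=
  ∃ n k : ℕ,
    (tt imp n a b) ^ k * (c ⊓ a ⊓ b) ≤ d ⊓ a ⊓ b ∧
    (tt imp n a b) ^ k * (d ⊓ a ⊓ b) ≤ c ⊓ a ⊓ b ∧
    (tt imp n a b) ^ k * (c ⊔ a ⊔ b) ≤ d ⊔ a ⊔ b ∧
    (tt imp n a b) ^ k * (d ⊔ a ⊔ b) ≤ c ⊔ a ⊔ b ∧
    (tt imp n a b) ^ k ≤ biimp imp c d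

theorem dlcmi_Rrel_latcong {α : Type*} [DistribLattice α] [CommMonoid α]
    (htop : ∀ a : α, a ≤ 1)
    (imp : α → α → α)
    (h4 : ∀ a b c : α, imp a b ⊓ imp a c = imp a (b ⊓ c))
    (h5 : ∀ a b c : α, imp a c ⊓ imp b c = imp (a ⊔ b) c)
    (h6 : ∀ a : α, imp a a = 1)
    (h7 : ∀ a b c : α, (a ⊔ b) * c = a * c ⊔ b * c)
    (h8 : ∀ a b c : α, imp a b * imp b c ≤ imp a c)
    (h9 : ∀ a b c : α, imp a b ≤ imp (a * c) (b * c))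
    (a b : α) :
    Rrel imp a b a b ∧ IsLatCong (fun c d => Rrel imp a b c d) := by
  -- multiplication is monotone
  have mulmono : ∀ x y z : α, x ≤ y → x * z ≤ y * z := by
    intro x y z h
    have hh := h7 x y z
    rw [sup_eq_right.mpr h] at hh
    rw [hh]; exact le_sup_left
  have mulmono2 : ∀ x y u v : α, x ≤ y → u ≤ v → x * u ≤ y * v := by
    intro x y u v h1 h2
    calc x * u ≤ y * u := mulmono _ _ _ h1
    _ = u * y := mul_comm _ _
    _ ≤ v * y := mulmono _ _ _ h2
    _ = y * v := mul_comm _ _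
  have mulle : ∀ x y : α, x * y ≤ y := by
    intro x y
    calc x * y ≤ 1 * y := mulmono _ _ _ (htop x)
    _ = y := one_mul y
  have powmono : ∀ k : ℕ, ∀ x y : α, x ≤ y → x ^ k ≤ y ^ k := by
    intro k
    induction k with
    | zero => intro x y _; simp
    | succ n ih =>
      intro x y h
      rw [pow_succ, pow_succ]
      exact mulmono2 _ _ _ _ (ih x y h) h
  -- imp facts
  have impanti : ∀ x y z : α, x ≤ y → imp y z ≤ imp x z := by
    intro x y z h
    have hh := h5 x y z
    rw [sup_eq_right.mpr h] at hh
    exact inf_eq_right.mp hh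
  have impmono : ∀ x y z : α, y ≤ z → imp x y ≤ imp x z := by
    intro x y z h
    have hh := h4 x y z
    rw [inf_eq_left.mpr h] at hh
    exact inf_eq_left.mp hh
  have impone : ∀ x y : α, x ≤ y → imp x y = 1 := by
    intro x y h
    refine le_antisymm (htop _) ?_
    calc (1:α) = imp y y := (h6 y).symm
    _ ≤ imp x y := impanti _ _ _ h
  -- tt is antitone in n
  have ttanti : ∀ m n : ℕ, m ≤ n → tt imp n a b ≤ tt imp m a b := by
    intro m n h
    induction n with
    | zero =>
      have : m = 0 := Nat.le_zero.mp h
      subst this; exact le_refl _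
    | succ n ih =>
      rcases Nat.lt_or_ge m (n+1) with h' | h'
      · exact le_trans (inf_le_left : tt imp (n+1) a b ≤ tt imp n a b)
          (ih (Nat.lt_succ_iff.mp h'))
      · have : m = n+1 := le_antisymm h h'
        subst this; exact le_refl _
  -- biimp facts
  have biimptrans : ∀ c d e : α, biimp imp c d * biimp imp d e ≤ biimp imp c e := by
    intro c d e
    unfold biimp
    apply le_inf
    · calc (imp c d ⊓ imp d c) * (imp d e ⊓ imp e d)
          ≤ imp c d * imp d e := mulmono2 _ _ _ _ inf_le_left inf_le_left
      _ ≤ imp c e := h8 _ _ _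
    · calc (imp c d ⊓ imp d c) * (imp d e ⊓ imp e d)
          ≤ imp d c * imp e d := mulmono2 _ _ _ _ inf_le_right inf_le_right
      _ = imp e d * imp d c := mul_comm _ _
      _ ≤ imp e c := h8 _ _ _
  have biimpinf : ∀ c d e : α, biimp imp c d ≤ biimp imp (c ⊓ e) (d ⊓ e) := by
    intro c d e
    unfold biimp
    apply le_inf
    · rw [← h4]
      apply le_inf
      · exact le_trans inf_le_left (impanti _ _ _ inf_le_left)
      · rw [impone (c ⊓ e) e inf_le_right]; exact htop _
    · rw [← h4]
      apply le_inf
      · exact le_trans inf_le_right (impanti _ _ _ inf_le_left)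
      · rw [impone (d ⊓ e) e inf_le_right]; exact htop _
  have biimpsup : ∀ c d e : α, biimp imp c d ≤ biimp imp (c ⊔ e) (d ⊔ e) := by
    intro c d e
    unfold biimp
    apply le_inf
    · rw [← h5]
      apply le_inf
      · exact le_trans inf_le_left (impmono _ _ _ le_sup_left)
      · rw [impone e (d ⊔ e) le_sup_right]; exact htop _
    · rw [← h5]
      apply le_inf
      · exact le_trans inf_le_right (impmono _ _ _ le_sup_left)
      · rw [impone e (c ⊔ e) le_sup_right]; exact htop _
  refine ⟨?_, ⟨?_, ?_, ?_⟩, ?_, ?_⟩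
  · -- Rrel imp a b a b
    refine ⟨0, 1, ?_, ?_, ?_, ?_, ?_⟩
    · refine le_trans (mulle _ _) (le_inf (le_inf inf_le_right
        (le_trans inf_le_left inf_le_left)) inf_le_right)
    · refine le_trans (mulle _ _) (le_inf (le_inf
        (le_trans inf_le_left inf_le_right)
        (le_trans inf_le_left inf_le_right)) inf_le_right)
    · refine le_trans (mulle _ _) (sup_le (sup_le
        (le_trans le_sup_right le_sup_left)
        (le_trans le_sup_right le_sup_left)) le_sup_right)
    · refine le_trans (mulle _ _) (sup_le (sup_le le_sup_right
        (le_trans le_sup_right le_sup_left)) le_sup_right)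
    · rw [pow_one]; exact le_refl _
  · -- refl
    intro c
    refine ⟨0, 0, ?_, ?_, ?_, ?_, ?_⟩ <;> rw [pow_zero]
    · rw [one_mul]
    · rw [one_mul]
    · rw [one_mul]
    · rw [one_mul]
    · unfold biimp; rw [h6, inf_idem]
  · -- symm
    intro c d ⟨n, k, H1, H2, H3, H4, H5⟩
    refine ⟨n, k, H2, H1, H4, H3, ?_⟩
    unfold biimp at H5 ⊢
    rw [inf_comm]
    exact H5
  · -- trans
    intro c d e ⟨n1, k1, H1, H2, H3, H4, H5⟩ ⟨n2, k2, G1, G2, G3, G4, G5⟩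
    refine ⟨max n1 n2, k1 + k2, ?_, ?_, ?_, ?_, ?_⟩
    all_goals
      have key : tt imp (max n1 n2) a b ^ (k1 + k2)
          ≤ tt imp n1 a b ^ k1 * tt imp n2 a b ^ k2 := by
        rw [pow_add]
        exact mulmono2 _ _ _ _ (powmono _ _ _ (ttanti _ _ (le_max_left _ _)))
          (powmono _ _ _ (ttanti _ _ (le_max_right _ _)))
    · calc tt imp (max n1 n2) a b ^ (k1 + k2) * (c ⊓ a ⊓ b)
          ≤ (tt imp n1 a b ^ k1 * tt imp n2 a b ^ k2) * (c ⊓ a ⊓ b) :=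
            mulmono _ _ _ key
      _ = tt imp n2 a b ^ k2 * (tt imp n1 a b ^ k1 * (c ⊓ a ⊓ b)) := by
            rw [mul_comm (tt imp n1 a b ^ k1), mul_assoc]
      _ ≤ tt imp n2 a b ^ k2 * (d ⊓ a ⊓ b) := mulmono2 _ _ _ _ (le_refl _) H1
      _ ≤ e ⊓ a ⊓ b := G1
    · calc tt imp (max n1 n2) a b ^ (k1 + k2) * (e ⊓ a ⊓ b)
          ≤ (tt imp n1 a b ^ k1 * tt imp n2 a b ^ k2) * (e ⊓ a ⊓ b) :=
            mulmono _ _ _ key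
      _ = tt imp n1 a b ^ k1 * (tt imp n2 a b ^ k2 * (e ⊓ a ⊓ b)) := by
            rw [mul_assoc]
      _ ≤ tt imp n1 a b ^ k1 * (d ⊓ a ⊓ b) := mulmono2 _ _ _ _ (le_refl _) G2
      _ ≤ c ⊓ a ⊓ b := H2
    · calc tt imp (max n1 n2) a b ^ (k1 + k2) * (c ⊔ a ⊔ b)
          ≤ (tt imp n1 a b ^ k1 * tt imp n2 a b ^ k2) * (c ⊔ a ⊔ b) :=
            mulmono _ _ _ key
      _ = tt imp n2 a b ^ k2 * (tt imp n1 a b ^ k1 * (c ⊔ a ⊔ b)) := by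
            rw [mul_comm (tt imp n1 a b ^ k1), mul_assoc]
      _ ≤ tt imp n2 a b ^ k2 * (d ⊔ a ⊔ b) := mulmono2 _ _ _ _ (le_refl _) H3
      _ ≤ e ⊔ a ⊔ b := G3
    · calc tt imp (max n1 n2) a b ^ (k1 + k2) * (e ⊔ a ⊔ b)
          ≤ (tt imp n1 a b ^ k1 * tt imp n2 a b ^ k2) * (e ⊔ a ⊔ b) :=
            mulmono _ _ _ key
      _ = tt imp n1 a b ^ k1 * (tt imp n2 a b ^ k2 * (e ⊔ a ⊔ b)) := by
            rw [mul_assoc]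
      _ ≤ tt imp n1 a b ^ k1 * (d ⊔ a ⊔ b) := mulmono2 _ _ _ _ (le_refl _) G4
      _ ≤ c ⊔ a ⊔ b := H4
    · calc tt imp (max n1 n2) a b ^ (k1 + k2)
          ≤ tt imp n1 a b ^ k1 * tt imp n2 a b ^ k2 := key
      _ ≤ biimp imp c d * biimp imp d e := mulmono2 _ _ _ _ H5 G5
      _ ≤ biimp imp c e := biimptrans _ _ _
  · -- inf compatibility
    intro c d e ⟨n, k, H1, H2, H3, H4, H5⟩
    refine ⟨n, k, ?_, ?_, ?_, ?_, le_trans H5 (biimpinf _ _ _)⟩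
    · have hx : tt imp n a b ^ k * (c ⊓ e ⊓ a ⊓ b) ≤ d ⊓ a ⊓ b :=
        le_trans (mulmono2 _ _ _ _ (le_refl _)
          (by exact le_inf (le_inf (le_trans inf_le_left (le_trans inf_le_left inf_le_left)) (le_trans inf_le_left inf_le_right)) inf_le_right : c ⊓ e ⊓ a ⊓ b ≤ c ⊓ a ⊓ b)) H1
      have hy : tt imp n a b ^ k * (c ⊓ e ⊓ a ⊓ b) ≤ e :=
        le_trans (mulle _ _) (le_trans inf_le_left (le_trans inf_le_left inf_le_right))
      exact le_inf (le_inf (le_inf (le_trans hx (le_trans inf_le_left inf_le_left)) hy)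
        (le_trans hx (le_trans inf_le_left inf_le_right))) (le_trans hx inf_le_right)
    · have hx : tt imp n a b ^ k * (d ⊓ e ⊓ a ⊓ b) ≤ c ⊓ a ⊓ b :=
        le_trans (mulmono2 _ _ _ _ (le_refl _)
          (by exact le_inf (le_inf (le_trans inf_le_left (le_trans inf_le_left inf_le_left)) (le_trans inf_le_left inf_le_right)) inf_le_right : d ⊓ e ⊓ a ⊓ b ≤ d ⊓ a ⊓ b)) H2
      have hy : tt imp n a b ^ k * (d ⊓ e ⊓ a ⊓ b) ≤ e :=
        le_trans (mulle _ _) (le_trans inf_le_left (le_trans inf_le_left inf_le_right))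
      exact le_inf (le_inf (le_inf (le_trans hx (le_trans inf_le_left inf_le_left)) hy)
        (le_trans hx (le_trans inf_le_left inf_le_right))) (le_trans hx inf_le_right)
    · have hdist : ∀ x : α, x ⊓ e ⊔ a ⊔ b = (x ⊔ a ⊔ b) ⊓ (e ⊔ a ⊔ b) := by
        intro x
        rw [sup_inf_right, sup_inf_right]
      rw [hdist c, hdist d]
      refine le_inf ?_ ?_
      · exact le_trans (mulmono2 _ _ _ _ (le_refl _) inf_le_left) H3
      · exact le_trans (mulle _ _) inf_le_right
    · have hdist : ∀ x : α, x ⊓ e ⊔ a ⊔ b = (x ⊔ a ⊔ b) ⊓ (e ⊔ a ⊔ b) := by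
        intro x
        rw [sup_inf_right, sup_inf_right]
      rw [hdist c, hdist d]
      refine le_inf ?_ ?_
      · exact le_trans (mulmono2 _ _ _ _ (le_refl _) inf_le_left) H4
      · exact le_trans (mulle _ _) inf_le_right
  · -- sup compatibility
    intro c d e ⟨n, k, H1, H2, H3, H4, H5⟩
    refine ⟨n, k, ?_, ?_, ?_, ?_, le_trans H5 (biimpsup _ _ _)⟩
    · have hdist : ∀ x : α, (x ⊔ e) ⊓ a ⊓ b = (x ⊓ a ⊓ b) ⊔ (e ⊓ a ⊓ b) := by
        intro x
        rw [inf_sup_right, inf_sup_right]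
      rw [hdist c, hdist d]
      calc tt imp n a b ^ k * (c ⊓ a ⊓ b ⊔ e ⊓ a ⊓ b)
          = tt imp n a b ^ k * (c ⊓ a ⊓ b) ⊔ tt imp n a b ^ k * (e ⊓ a ⊓ b) := by
            rw [mul_comm, h7, mul_comm (c ⊓ a ⊓ b), mul_comm (e ⊓ a ⊓ b)]
      _ ≤ d ⊓ a ⊓ b ⊔ e ⊓ a ⊓ b := sup_le_sup H1 (mulle _ _)
    · have hdist : ∀ x : α, (x ⊔ e) ⊓ a ⊓ b = (x ⊓ a ⊓ b) ⊔ (e ⊓ a ⊓ b) := by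
        intro x
        rw [inf_sup_right, inf_sup_right]
      rw [hdist c, hdist d]
      calc tt imp n a b ^ k * (d ⊓ a ⊓ b ⊔ e ⊓ a ⊓ b)
          = tt imp n a b ^ k * (d ⊓ a ⊓ b) ⊔ tt imp n a b ^ k * (e ⊓ a ⊓ b) := by
            rw [mul_comm, h7, mul_comm (d ⊓ a ⊓ b), mul_comm (e ⊓ a ⊓ b)]
      _ ≤ c ⊓ a ⊓ b ⊔ e ⊓ a ⊓ b := sup_le_sup H2 (mulle _ _)
    · have hre : ∀ x : α, x ⊔ e ⊔ a ⊔ b = (x ⊔ a ⊔ b) ⊔ e := by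
        intro x
        ac_rfl
      rw [hre c, hre d]
      calc tt imp n a b ^ k * (c ⊔ a ⊔ b ⊔ e)
          = tt imp n a b ^ k * (c ⊔ a ⊔ b) ⊔ tt imp n a b ^ k * e := by
            rw [mul_comm, h7, mul_comm (c ⊔ a ⊔ b), mul_comm e]
      _ ≤ (d ⊔ a ⊔ b) ⊔ e := sup_le_sup H3 (mulle _ _)
    · have hre : ∀ x : α, x ⊔ e ⊔ a ⊔ b = (x ⊔ a ⊔ b) ⊔ e := by
        intro x
        ac_rfl
      rw [hre c, hre d]
      calc tt imp n a b ^ k * (d ⊔ a ⊔ b ⊔ e)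
          = tt imp n a b ^ k * (d ⊔ a ⊔ b) ⊔ tt imp n a b ^ k * e := by
            rw [mul_comm, h7, mul_comm (d ⊔ a ⊔ b), mul_comm e]
      _ ≤ (c ⊔ a ⊔ b) ⊔ e := sup_le_sup H4 (mulle _ _)
end

section
/- Let A be a DLCMI, a,b ∈ A, and suppose tₙᵏ(a,b) ≤ c↔d, tₙᵏ(a,b) ≤ u↔w, tₙᵏ(a,b)·(c∨a∨b) ≤ d∨a∨b, and tₙᵏ(a,b)·(u∨a∨b) ≤ w∨a∨b. Then tₙ²ᵏ(a,b)·((c·u)∨a∨b) ≤ (d·w)∨a∨b and tₙ²ᵏ(a,b) ≤ (c·u)↔(d·w). -/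
theorem dlcmi_mul_compat {α : Type*} [DistribLattice α] [CommMonoid α]
    (htop : ∀ a : α, a ≤ 1)
    (imp : α → α → α)
    (h4 : ∀ a b c : α, imp a b ⊓ imp a c = imp a (b ⊓ c))
    (h5 : ∀ a b c : α, imp a c ⊓ imp b c = imp (a ⊔ b) c)
    (h6 : ∀ a : α, imp a a = 1)
    (h7 : ∀ a b c : α, (a ⊔ b) * c = a * c ⊔ b * c)
    (h8 : ∀ a b c : α, imp a b * imp b c ≤ imp a c)
    (h9 : ∀ a b c : α, imp a b ≤ imp (a * c) (b * c))
    (a b c d u w : α) (n k : ℕ)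
    (hcd : (tt imp n a b) ^ k ≤ biimp imp c d)
    (huw : (tt imp n a b) ^ k ≤ biimp imp u w)
    (hcj : (tt imp n a b) ^ k * (c ⊔ a ⊔ b) ≤ d ⊔ a ⊔ b)
    (huj : (tt imp n a b) ^ k * (u ⊔ a ⊔ b) ≤ w ⊔ a ⊔ b) :
    (tt imp n a b) ^ (2 * k) * ((c * u) ⊔ a ⊔ b) ≤ (d * w) ⊔ a ⊔ b ∧
    (tt imp n a b) ^ (2 * k) ≤ biimp imp (c * u) (d * w) := by

  -- multiplication is monotone
  have hmul : ∀ x y z v : α, x ≤ y → z ≤ v → x * z ≤ y * v := by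
    intro x y z v hxy hzv
    have h1 : x * z ≤ y * z := by
      have : y * z = x * z ⊔ y * z := by rw [← h7, sup_eq_right.mpr hxy]
      rw [this]; exact le_sup_left
    have h2 : y * z ≤ y * v := by
      have : y * v = z * y ⊔ v * y := by
        rw [← h7, sup_eq_right.mpr hzv, mul_comm]
      rw [mul_comm y z, this]; exact le_sup_left
    exact h1.trans h2
  have hxy : ∀ x y : α, x * y ≤ y := fun x y => by
    have := hmul x 1 y y (htop x) le_rfl
    rwa [one_mul] at this
  have hyx : ∀ x y : α, x * y ≤ x := fun x y => by
    rw [mul_comm]; exact hxy y x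
  set t := (tt imp n a b) ^ k with ht
  have h2k : (tt imp n a b) ^ (2 * k) = t * t := by rw [two_mul, pow_add]
  have hprod : (d ⊔ a ⊔ b) * (w ⊔ a ⊔ b) ≤ d * w ⊔ a ⊔ b := by
    rw [h7, h7]
    refine sup_le (sup_le ?_ ?_) ?_
    · rw [mul_comm, h7, h7]
      refine sup_le (sup_le ?_ ?_) ?_
      · rw [mul_comm]; exact le_sup_left.trans le_sup_left
      · exact (hyx a d).trans (le_sup_right.trans le_sup_left)
      · exact (hyx b d).trans le_sup_right
    · exact (hyx a _).trans (le_sup_right.trans le_sup_left)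
    · exact (hyx b _).trans le_sup_right
  have htc : t * c ≤ d ⊔ a ⊔ b :=
    (hmul t t c (c ⊔ a ⊔ b) le_rfl (le_sup_left.trans le_sup_left)).trans hcj
  have htu : t * u ≤ w ⊔ a ⊔ b :=
    (hmul t t u (u ⊔ a ⊔ b) le_rfl (le_sup_left.trans le_sup_left)).trans huj
  constructor
  · rw [h2k, mul_comm, h7, h7]
    refine sup_le (sup_le ?_ ?_) ?_
    · rw [mul_comm (c * u), mul_mul_mul_comm]
      exact (hmul _ _ _ _ htc htu).trans hprod
    · exact (hyx a _).trans (le_sup_right.trans le_sup_left)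
    · exact (hyx b _).trans le_sup_right
  · rw [h2k]
    have hcd1 : t ≤ imp c d := hcd.trans inf_le_left
    have hcd2 : t ≤ imp d c := hcd.trans inf_le_right
    have huw1 : t ≤ imp u w := huw.trans inf_le_left
    have huw2 : t ≤ imp w u := huw.trans inf_le_right
    have key : ∀ c' d' u' w' : α, t ≤ imp c' d' → t ≤ imp u' w' →
        t * t ≤ imp (c' * u') (d' * w') := by
      intro c' d' u' w' h1 h2
      have s1 : imp c' d' ≤ imp (c' * u') (d' * u') := h9 c' d' u'
      have s2 : imp u' w' ≤ imp (d' * u') (d' * w') := by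
        have := h9 u' w' d'
        rwa [mul_comm u' d', mul_comm w' d'] at this
      exact (hmul _ _ _ _ (h1.trans s1) (h2.trans s2)).trans (h8 _ _ _)
    exact le_inf (key c d u w hcd1 huw1) (key d c w u hcd2 huw2)
end

section
/- Let A be a DLCMI, a,b ∈ A, and suppose tₙᵏ(a,b) ≤ c↔d and tₙᵏ(a,b) ≤ u↔w. Then tₙ²ᵏ(a,b)·(c→u) ≤ d→w. -/
theorem dlcmi_imp_compat {α : Type*} [DistribLattice α] [CommMonoid α]
    (htop : ∀ a : α, a ≤ 1)
    (imp : α → α → α)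
    (h4 : ∀ a b c : α, imp a b ⊓ imp a c = imp a (b ⊓ c))
    (h5 : ∀ a b c : α, imp a c ⊓ imp b c = imp (a ⊔ b) c)
    (h6 : ∀ a : α, imp a a = 1)
    (h7 : ∀ a b c : α, (a ⊔ b) * c = a * c ⊔ b * c)
    (h8 : ∀ a b c : α, imp a b * imp b c ≤ imp a c)
    (h9 : ∀ a b c : α, imp a b ≤ imp (a * c) (b * c))
    (a b c d u w : α) (n k : ℕ)
    (hcd : (tt imp n a b) ^ k ≤ biimp imp c d)
    (huw : (tt imp n a b) ^ k ≤ biimp imp u w) :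
    (tt imp n a b) ^ (2 * k) * imp c u ≤ imp d w := by
  have mono : ∀ x y z : α, x ≤ y → x * z ≤ y * z := by
    intro x y z h
    have h' : y * z = x * z ⊔ y * z := by
      rw [← h7, sup_eq_right.mpr h]
    exact le_sup_left.trans_eq h'.symm
  set t := (tt imp n a b) ^ k with ht
  have h1 : t ≤ imp d c := hcd.trans inf_le_right
  have h2 : t ≤ imp u w := huw.trans inf_le_left
  calc (tt imp n a b) ^ (2 * k) * imp c u
      = (t * t) * imp c u := by rw [ht, two_mul, pow_add]
    _ ≤ (imp d c * imp u w) * imp c u := by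
        refine mono _ _ _ ?_
        calc t * t ≤ imp d c * t := mono _ _ _ h1
          _ = t * imp d c := mul_comm _ _
          _ ≤ imp u w * imp d c := mono _ _ _ h2
          _ = imp d c * imp u w := mul_comm _ _
    _ = (imp d c * imp c u) * imp u w := by
        rw [mul_right_comm]
    _ ≤ imp d u * imp u w := mono _ _ _ (h8 d c u)
    _ ≤ imp d w := h8 d u w
end

section
/- Let A be a DLCMI, a,b ∈ A, and suppose tₙᵏ(a,b) ≤ c↔d and tₙᵏ(a,b) ≤ u↔w. Then t_{n+1}²ᵏ(a,b) ≤ (c→u)↔(d→w). -/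
section Aux

variable {α : Type*} [DistribLattice α] [CommMonoid α] (imp : α → α → α)

lemma dlcmi_mul_mono (h7 : ∀ a b c : α, (a ⊔ b) * c = a * c ⊔ b * c)
    {x y z t : α} (hxy : x ≤ y) (hzt : z ≤ t) : x * z ≤ y * t := by
  have step : ∀ p q r : α, p ≤ q → p * r ≤ q * r := by
    intro p q r hpq
    have h : q * r = p * r ⊔ q * r := by rw [← h7, sup_eq_right.mpr hpq]
    rw [h]; exact le_sup_left
  calc x * z ≤ y * z := step x y z hxy
    _ = z * y := mul_comm _ _
    _ ≤ t * y := step z t y hzt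
    _ = y * t := mul_comm _ _

lemma dlcmi_pow_mono (h7 : ∀ a b c : α, (a ⊔ b) * c = a * c ⊔ b * c)
    {x y : α} (hxy : x ≤ y) : ∀ m : ℕ, x ^ m ≤ y ^ m := by
  intro m
  induction m with
  | zero => simp
  | succ m ih =>
    rw [pow_succ, pow_succ]
    exact dlcmi_mul_mono h7 ih hxy

lemma dlcmi_imp_mono2 (h4 : ∀ a b c : α, imp a b ⊓ imp a c = imp a (b ⊓ c))
    {x y z : α} (h : y ≤ z) : imp x y ≤ imp x z := by
  have := h4 x y z
  rw [inf_eq_left.mpr h] at this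
  rw [← this]; exact inf_le_right

lemma dlcmi_imp_anti1 (h5 : ∀ a b c : α, imp a c ⊓ imp b c = imp (a ⊔ b) c)
    {x y z : α} (h : x ≤ y) : imp y z ≤ imp x z := by
  have := h5 x y z
  rw [sup_eq_right.mpr h] at this
  rw [← this]; exact inf_le_left

lemma dlcmi_box_mul_fact (h9 : ∀ a b c : α, imp a b ≤ imp (a * c) (b * c))
    (x y : α) : imp 1 x ≤ imp y (x * y) := by
  have := h9 1 x y
  rwa [one_mul] at this

lemma dlcmi_box_mul (h4 : ∀ a b c : α, imp a b ⊓ imp a c = imp a (b ⊓ c))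
    (h7 : ∀ a b c : α, (a ⊔ b) * c = a * c ⊔ b * c)
    (h8 : ∀ a b c : α, imp a b * imp b c ≤ imp a c)
    (h9 : ∀ a b c : α, imp a b ≤ imp (a * c) (b * c))
    (x y : α) : imp 1 x * imp 1 y ≤ imp 1 (x * y) := by
  have h1 : imp 1 y ≤ imp x (y * x) := dlcmi_box_mul_fact imp h9 y x
  have h2 : imp x (y * x) = imp x (x * y) := by rw [mul_comm]
  calc imp 1 x * imp 1 y ≤ imp 1 x * imp x (x * y) := by
        refine dlcmi_mul_mono h7 le_rfl ?_
        rw [← h2]; exact h1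
    _ ≤ imp 1 (x * y) := h8 1 x (x * y)

lemma dlcmi_box_pow (h4 : ∀ a b c : α, imp a b ⊓ imp a c = imp a (b ⊓ c))
    (h6 : ∀ a : α, imp a a = 1)
    (h7 : ∀ a b c : α, (a ⊔ b) * c = a * c ⊔ b * c)
    (h8 : ∀ a b c : α, imp a b * imp b c ≤ imp a c)
    (h9 : ∀ a b c : α, imp a b ≤ imp (a * c) (b * c))
    (x : α) : ∀ m : ℕ, (imp 1 x) ^ m ≤ imp 1 (x ^ m) := by
  intro m
  induction m with
  | zero => simp [h6]
  | succ m ih =>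
    rw [pow_succ, pow_succ]
    calc (imp 1 x) ^ m * imp 1 x ≤ imp 1 (x ^ m) * imp 1 x :=
          dlcmi_mul_mono h7 ih le_rfl
      _ ≤ imp 1 (x ^ m * x) := dlcmi_box_mul imp h4 h7 h8 h9 _ _

lemma dlcmi_tt_le_box (h4 : ∀ a b c : α, imp a b ⊓ imp a c = imp a (b ⊓ c))
    (a b : α) : ∀ n : ℕ, tt imp (n + 1) a b ≤ imp 1 (tt imp n a b) := by
  intro n
  induction n with
  | zero =>
    show tt imp 0 a b ⊓ boxIter imp 1 (biimp imp a b) ≤ imp 1 (tt imp 0 a b)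
    exact inf_le_right
  | succ n ih =>
    show tt imp (n + 1) a b ⊓ boxIter imp (n + 2) (biimp imp a b)
        ≤ imp 1 (tt imp (n + 1) a b)
    have hsplit : imp 1 (tt imp (n + 1) a b)
        = imp 1 (tt imp n a b) ⊓ imp 1 (boxIter imp (n + 1) (biimp imp a b)) := by
      show imp 1 (tt imp n a b ⊓ boxIter imp (n + 1) (biimp imp a b)) = _
      rw [h4]
    rw [hsplit]
    refine le_inf ?_ ?_
    · exact le_trans inf_le_left ih
    · exact inf_le_right

end Aux

theorem dlcmi_imp_compat_biimp {α : Type*} [DistribLattice α] [CommMonoid α]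
    (htop : ∀ a : α, a ≤ 1)
    (imp : α → α → α)
    (h4 : ∀ a b c : α, imp a b ⊓ imp a c = imp a (b ⊓ c))
    (h5 : ∀ a b c : α, imp a c ⊓ imp b c = imp (a ⊔ b) c)
    (h6 : ∀ a : α, imp a a = 1)
    (h7 : ∀ a b c : α, (a ⊔ b) * c = a * c ⊔ b * c)
    (h8 : ∀ a b c : α, imp a b * imp b c ≤ imp a c)
    (h9 : ∀ a b c : α, imp a b ≤ imp (a * c) (b * c))
    (a b c d u w : α) (n k : ℕ)
    (hcd : (tt imp n a b) ^ k ≤ biimp imp c d)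
    (huw : (tt imp n a b) ^ k ≤ biimp imp u w) :
    (tt imp (n + 1) a b) ^ (2 * k) ≤ biimp imp (imp c u) (imp d w) := by
  set t := tt imp n a b with ht
  have hcd1 : t ^ k ≤ imp c d := le_trans hcd inf_le_left
  have hcd2 : t ^ k ≤ imp d c := le_trans hcd inf_le_right
  have huw1 : t ^ k ≤ imp u w := le_trans huw inf_le_left
  have huw2 : t ^ k ≤ imp w u := le_trans huw inf_le_right
  have hT : tt imp (n + 1) a b ≤ imp 1 t := dlcmi_tt_le_box imp h4 a b n
  have hmain : (tt imp (n + 1) a b) ^ (2 * k) ≤ imp 1 (t ^ (2 * k)) :=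
    le_trans (dlcmi_pow_mono h7 hT (2 * k)) (dlcmi_box_pow imp h4 h6 h7 h8 h9 t (2 * k))
  have hsplit : t ^ (2 * k) = t ^ k * t ^ k := by rw [two_mul, pow_add]
  -- direction 1 : imp (imp c u) (imp d w)
  have key1 : t ^ (2 * k) * imp c u ≤ imp d w := by
    rw [hsplit]
    calc t ^ k * t ^ k * imp c u
        ≤ imp d c * imp u w * imp c u :=
          dlcmi_mul_mono h7 (dlcmi_mul_mono h7 hcd2 huw1) le_rfl
      _ = imp d c * imp c u * imp u w := mul_right_comm _ _ _
      _ ≤ imp d u * imp u w := dlcmi_mul_mono h7 (h8 d c u) le_rfl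
      _ ≤ imp d w := h8 d u w
  have dir1 : imp 1 (t ^ (2 * k)) ≤ imp (imp c u) (imp d w) :=
    le_trans (dlcmi_box_mul_fact imp h9 (t ^ (2 * k)) (imp c u))
      (dlcmi_imp_mono2 imp h4 key1)
  -- direction 2 : imp (imp d w) (imp c u)
  have key2 : t ^ (2 * k) * imp d w ≤ imp c u := by
    rw [hsplit]
    calc t ^ k * t ^ k * imp d w
        ≤ imp c d * imp w u * imp d w :=
          dlcmi_mul_mono h7 (dlcmi_mul_mono h7 hcd1 huw2) le_rfl
      _ = imp c d * imp d w * imp w u := mul_right_comm _ _ _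
      _ ≤ imp c w * imp w u := dlcmi_mul_mono h7 (h8 c d w) le_rfl
      _ ≤ imp c u := h8 c w u
  have dir2 : imp 1 (t ^ (2 * k)) ≤ imp (imp d w) (imp c u) :=
    le_trans (dlcmi_box_mul_fact imp h9 (t ^ (2 * k)) (imp d w))
      (dlcmi_imp_mono2 imp h4 key2)
  exact le_trans hmain (le_inf dir1 dir2)
end

section
/- Let A be an integral distributive commutative residuated lattice and a,b,c,d ∈ A. Then (c,d) ∈ θ(a,b) if and only if there exists a natural number k such that (a↔b)ᵏ ≤ c↔d. -/
def IsCong {α : Type*} [Lattice α] [Mul α] (imp : α → α → α) (r : α → α → Prop) : Prop :=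
  Equivalence r ∧ (∀ a b c : α, r a b → r (a ⊓ c) (b ⊓ c)) ∧
    (∀ a b c : α, r a b → r (a ⊔ c) (b ⊔ c)) ∧
    (∀ a b c : α, r a b → r (a * c) (b * c)) ∧
    (∀ a b c : α, r a b → r (imp a c) (imp b c)) ∧
    (∀ a b c : α, r a b → r (imp c a) (imp c b))

theorem idcrl_principal_congruence {α : Type*} [DistribLattice α] [CommMonoid α]
    (htop : ∀ a : α, a ≤ 1)
    (imp : α → α → α)
    (resid : ∀ a b c : α, a * b ≤ c ↔ a ≤ imp b c)
    (a b c d : α) :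
    (∀ r : α → α → Prop, IsCong imp r → r a b → r c d) ↔
      (∃ k : ℕ, (biimp imp a b) ^ k ≤ biimp imp c d) := by
  -- basic residuation facts
  have hmp : ∀ x y : α, imp x y * x ≤ y := fun x y => (resid _ _ _).mpr le_rfl
  have h1le : ∀ x y : α, x ≤ y → (1 : α) ≤ imp x y := fun x y h =>
    (resid 1 x y).mp (by simpa using h)
  have hmonoL : ∀ x y z : α, x ≤ y → x * z ≤ y * z := fun x y z h =>
    (resid _ _ _).mpr (h.trans ((resid _ _ _).mp le_rfl))
  have hmul : ∀ {x y u v : α}, x ≤ y → u ≤ v → x * u ≤ y * v := by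
    intro x y u v h1 h2
    calc x * u ≤ y * u := hmonoL _ _ _ h1
      _ = u * y := mul_comm _ _
      _ ≤ v * y := hmonoL _ _ _ h2
      _ = y * v := mul_comm _ _
  have hsmall : ∀ x z : α, x * z ≤ z := fun x z => by
    have := hmul (htop x) (le_refl z); simpa using this
  have hdistrib : ∀ u x z : α, u * (x ⊔ z) ≤ u * x ⊔ u * z := by
    intro u x z
    rw [mul_comm]
    refine (resid _ _ _).mpr (sup_le ?_ ?_)
    · exact (resid _ _ _).mp (by rw [mul_comm]; exact le_sup_left)
    · exact (resid _ _ _).mp (by rw [mul_comm]; exact le_sup_right)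
  have hA : ∀ x y z : α, imp x y ≤ imp (x ⊓ z) (y ⊓ z) := fun x y z =>
    (resid _ _ _).mp (le_inf ((hmul le_rfl inf_le_left).trans (hmp x y))
      ((hmul le_rfl inf_le_right).trans (hsmall _ _)))
  have hB : ∀ x y z : α, imp x y ≤ imp (x ⊔ z) (y ⊔ z) := fun x y z =>
    (resid _ _ _).mp ((hdistrib _ _ _).trans (sup_le_sup (hmp x y) (hsmall _ z)))
  have hC : ∀ x y z : α, imp x y ≤ imp (x * z) (y * z) := fun x y z =>
    (resid _ _ _).mp (by rw [← mul_assoc]; exact hmonoL _ _ _ (hmp x y))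
  have hTransImp : ∀ x y z : α, imp x y * imp y z ≤ imp x z := by
    intro x y z
    refine (resid _ _ _).mp ?_
    calc imp x y * imp y z * x = imp y z * (imp x y * x) := by
          rw [mul_comm (imp x y), mul_assoc]
      _ ≤ imp y z * y := hmul le_rfl (hmp x y)
      _ ≤ z := hmp y z
  have hD : ∀ x y z : α, imp x y ≤ imp (imp y z) (imp x z) := fun x y z =>
    (resid _ _ _).mp (hTransImp x y z)
  have hE : ∀ x y z : α, imp x y ≤ imp (imp z x) (imp z y) := by
    intro x y z
    refine (resid _ _ _).mp ((resid _ _ _).mp ?_)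
    calc imp x y * imp z x * z = imp x y * (imp z x * z) := mul_assoc _ _ _
      _ ≤ imp x y * x := hmul le_rfl (hmp z x)
      _ ≤ y := hmp x y
  -- biimp monotonicity
  have hbA : ∀ x y z : α, biimp imp x y ≤ biimp imp (x ⊓ z) (y ⊓ z) := fun x y z =>
    le_inf (inf_le_left.trans (hA x y z)) (inf_le_right.trans (hA y x z))
  have hbB : ∀ x y z : α, biimp imp x y ≤ biimp imp (x ⊔ z) (y ⊔ z) := fun x y z =>
    le_inf (inf_le_left.trans (hB x y z)) (inf_le_right.trans (hB y x z))
  have hbC : ∀ x y z : α, biimp imp x y ≤ biimp imp (x * z) (y * z) := fun x y z =>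
    le_inf (inf_le_left.trans (hC x y z)) (inf_le_right.trans (hC y x z))
  have hbD : ∀ x y z : α, biimp imp x y ≤ biimp imp (imp x z) (imp y z) := fun x y z =>
    le_inf (inf_le_right.trans (hD y x z)) (inf_le_left.trans (hD x y z))
  have hbE : ∀ x y z : α, biimp imp x y ≤ biimp imp (imp z x) (imp z y) := fun x y z =>
    le_inf (inf_le_left.trans (hE x y z)) (inf_le_right.trans (hE y x z))
  have hbTrans : ∀ x y z : α, biimp imp x y * biimp imp y z ≤ biimp imp x z := by
    intro x y z
    refine le_inf ((hmul inf_le_left inf_le_left).trans (hTransImp x y z)) ?_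
    have h := hmul (inf_le_right : biimp imp x y ≤ imp y x)
      (inf_le_right : biimp imp y z ≤ imp z y)
    exact h.trans (by rw [mul_comm]; exact hTransImp z y x)
  have hbrefl : ∀ x : α, (1 : α) ≤ biimp imp x x := fun x =>
    le_inf (h1le x x le_rfl) (h1le x x le_rfl)
  have hbsymm : ∀ x y : α, biimp imp x y = biimp imp y x := fun x y => inf_comm _ _
  constructor
  · intro H
    apply H (fun c d => ∃ k, (biimp imp a b) ^ k ≤ biimp imp c d)
    · refine ⟨⟨?_, ?_, ?_⟩, ?_, ?_, ?_, ?_, ?_⟩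
      · intro x; exact ⟨0, by simpa using hbrefl x⟩
      · rintro x y ⟨k, hk⟩; exact ⟨k, by rwa [hbsymm y x]⟩
      · rintro x y z ⟨k, hk⟩ ⟨m, hm⟩
        exact ⟨k + m, by rw [pow_add]; exact (hmul hk hm).trans (hbTrans x y z)⟩
      · rintro x y z ⟨k, hk⟩; exact ⟨k, hk.trans (hbA x y z)⟩
      · rintro x y z ⟨k, hk⟩; exact ⟨k, hk.trans (hbB x y z)⟩
      · rintro x y z ⟨k, hk⟩; exact ⟨k, hk.trans (hbC x y z)⟩
      · rintro x y z ⟨k, hk⟩; exact ⟨k, hk.trans (hbD x y z)⟩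
      · rintro x y z ⟨k, hk⟩; exact ⟨k, hk.trans (hbE x y z)⟩
    · exact ⟨1, by simpa using le_rfl⟩
  · rintro ⟨k, hk⟩ r hcong hab
    obtain ⟨heq, hinf, _, hmulc, himpL, himpR⟩ := hcong
    have hbb : imp b b = 1 := le_antisymm (htop _) (h1le b b le_rfl)
    have h1 : r (imp a b) 1 := by have := himpL a b b hab; rwa [hbb] at this
    have h2 : r (imp b a) 1 := by have := himpR a b b hab; rwa [hbb] at this
    have he1 : r (biimp imp a b) 1 := by
      have t1 := hinf _ _ (imp b a) h1
      rw [inf_eq_right.mpr (htop (imp b a))] at t1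
      exact heq.trans t1 h2
    have hek : ∀ n : ℕ, r ((biimp imp a b) ^ n) 1 := by
      intro n
      induction n with
      | zero => simpa using heq.refl 1
      | succ n ih =>
        have t := hmulc _ _ ((biimp imp a b) ^ n) he1
        rw [one_mul] at t
        have t2 : r ((biimp imp a b) ^ (n + 1)) ((biimp imp a b) ^ n) := by
          rw [pow_succ, mul_comm]; exact t
        exact heq.trans t2 ih
    have hu := hek k
    have hcd1 : (biimp imp a b) ^ k * c ≤ d := (resid _ _ _).mpr (hk.trans inf_le_left)
    have hcd2 : (biimp imp a b) ^ k * d ≤ c := (resid _ _ _).mpr (hk.trans inf_le_right)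
    have rc : r c (c ⊓ d) := by
      have t := hmulc _ _ c hu
      rw [one_mul] at t
      have t2 := hinf _ _ d t
      rw [inf_eq_left.mpr hcd1] at t2
      exact heq.trans (heq.symm t) t2
    have rd : r d (c ⊓ d) := by
      have t := hmulc _ _ d hu
      rw [one_mul] at t
      have t2 := hinf _ _ c t
      rw [inf_eq_left.mpr hcd2, inf_comm d c] at t2
      exact heq.trans (heq.symm t) t2
    exact heq.trans rc (heq.symm rd)
end

section
/- Let A be a join-semilattice and g: A×A → A a function satisfying condition (M): for all a,b,c, b ≤ c implies g(a,c) ≤ g(a,b). Then the following are equivalent: (a) for every a the set {b ∈ A : g(a,b) ≤ b} has a minimum, defining f(a) := min{b : g(a,b) ≤ b}; (b) there exists h: A → A with g(a,h(a)) ≤ h(a) and h(a) ≤ g(a,b)∨b for all a,b. Moreover, in that case f = h. -/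
theorem min_characterization {α : Type*} [SemilatticeSup α]
    (g : α × α → α)
    (hM : ∀ a b c : α, b ≤ c → g (a, c) ≤ g (a, b)) :
    ((∃ f : α → α, ∀ a : α, IsLeast {b : α | g (a, b) ≤ b} (f a)) ↔
      (∃ h : α → α, ∀ a b : α, g (a, h a) ≤ h a ∧ h a ≤ g (a, b) ⊔ b)) ∧
    (∀ f h : α → α,
      (∀ a : α, IsLeast {b : α | g (a, b) ≤ b} (f a)) →
      (∀ a b : α, g (a, h a) ≤ h a ∧ h a ≤ g (a, b) ⊔ b) →
      f = h) := by
  constructor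
  · constructor
    · rintro ⟨f, hf⟩
      refine ⟨f, fun a b => ⟨(hf a).1, ?_⟩⟩
      exact (hf a).2 (le_trans (hM a b (g (a, b) ⊔ b) le_sup_right) le_sup_left)
    · rintro ⟨h, hh⟩
      refine ⟨h, fun a => ⟨(hh a a).1, fun b hb => ?_⟩⟩
      exact (hh a b).2.trans (sup_le hb le_rfl)
  · intro f h hf hh
    funext a
    exact le_antisymm ((hf a).2 (hh a a).1)
      ((hh a (f a)).2.trans (sup_le (hf a).1 le_rfl))
end

section
/- Let A be a DLCMI with a smallest element 0, n ≥ 1 a natural number, and γ: A → A a unary function. Then γ satisfies (g1) a ∨ ¬(γ(a))ⁿ ≤ γ(a) and (g2) γ(a) ≤ a ∨ ¬bⁿ ∨ b for all a,b, if and only if γ satisfies (g3) ¬(γ(0))ⁿ ≤ γ(0), (g4) γ(0) ≤ b ∨ ¬bⁿ for all b, and (g5) γ(a) = a ∨ γ(0) for all a. In particular such γ is a polynomial function. -/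
theorem dlcmi_gamma_characterization {α : Type*} [DistribLattice α] [CommMonoid α]
    [OrderBot α]
    (htop : ∀ a : α, a ≤ 1)
    (imp : α → α → α)
    (h4 : ∀ a b c : α, imp a b ⊓ imp a c = imp a (b ⊓ c))
    (h5 : ∀ a b c : α, imp a c ⊓ imp b c = imp (a ⊔ b) c)
    (h6 : ∀ a : α, imp a a = 1)
    (h7 : ∀ a b c : α, (a ⊔ b) * c = a * c ⊔ b * c)
    (h8 : ∀ a b c : α, imp a b * imp b c ≤ imp a c)
    (h9 : ∀ a b c : α, imp a b ≤ imp (a * c) (b * c))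
    (n : ℕ) (hn : 1 ≤ n) (γ : α → α) :
    ((∀ a : α, a ⊔ imp ((γ a) ^ n) ⊥ ≤ γ a) ∧
     (∀ a b : α, γ a ≤ a ⊔ imp (b ^ n) ⊥ ⊔ b)) ↔
    ((imp ((γ ⊥) ^ n) ⊥ ≤ γ ⊥) ∧
     (∀ b : α, γ ⊥ ≤ b ⊔ imp (b ^ n) ⊥) ∧
     (∀ a : α, γ a = a ⊔ γ ⊥)) := by
  have mul_mono : ∀ {x y : α} (c : α), x ≤ y → x * c ≤ y * c := by
    intro x y c h
    calc x * c ≤ x * c ⊔ y * c := le_sup_left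
      _ = (x ⊔ y) * c := (h7 x y c).symm
      _ = y * c := by rw [sup_eq_right.mpr h]
  have pow_mono : ∀ {x y : α}, x ≤ y → ∀ m : ℕ, x ^ m ≤ y ^ m := by
    intro x y h m
    induction m with
    | zero => simp
    | succ k ih =>
      calc x ^ (k + 1) = x ^ k * x := pow_succ x k
        _ ≤ y ^ k * x := mul_mono x ih
        _ = x * y ^ k := mul_comm _ _
        _ ≤ y * y ^ k := mul_mono _ h
        _ = y ^ (k + 1) := by rw [mul_comm, pow_succ]
  have imp_anti : ∀ {x y : α} (c : α), x ≤ y → imp y c ≤ imp x c := by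
    intro x y c h
    calc imp y c = imp (x ⊔ y) c := by rw [sup_eq_right.mpr h]
      _ = imp x c ⊓ imp y c := (h5 x y c).symm
      _ ≤ imp x c := inf_le_left
  constructor
  · rintro ⟨g1, g2⟩
    have hg3 : imp ((γ ⊥) ^ n) ⊥ ≤ γ ⊥ := le_trans le_sup_right (g1 ⊥)
    refine ⟨hg3, fun b => ?_, fun a => ?_⟩
    · exact (g2 ⊥ b).trans (sup_le (sup_le bot_le le_sup_right) le_sup_left)
    · apply le_antisymm
      · exact (g2 a (γ ⊥)).trans
          (sup_le (sup_le le_sup_left (hg3.trans le_sup_right)) le_sup_right)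
      · refine sup_le (le_sup_left.trans (g1 a)) ?_
        exact (g2 ⊥ (γ a)).trans
          (sup_le (sup_le bot_le ((le_sup_right.trans (g1 a)))) le_rfl)
  · rintro ⟨g3, g4, g5⟩
    constructor
    · intro a
      rw [g5 a]
      refine sup_le le_sup_left ?_
      have := (imp_anti ⊥ (pow_mono (le_sup_right : γ ⊥ ≤ a ⊔ γ ⊥) n)).trans g3
      exact this.trans le_sup_right
    · intro a b
      rw [g5 a]
      refine sup_le (le_sup_left.trans le_sup_left) ?_
      exact (g4 b).trans (sup_le le_sup_right (le_sup_right.trans le_sup_left))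
end
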